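/- (Expectation identity, deterministic form of Lemma 1, first part.) Let h > 0 satisfy Ah ≤ a. Then for every x ∈ ℝ, (2a/h²) ∫_ℝ [ Σ_{k=0}^{∞} K'((x − (2k+1)a − u)/h) ] f_Y(u) du = (K_h ⋆ f_X)(x) = ∫_ℝ K_h(x−v) f_X(v) dv. -/

import Mathlib

open MeasureTheory Real

open Set Filter

open scoped ENNReal

/-- Expectation identity (deterministic form of Lemma 1, first part):
for `h > 0` with `Ah ≤ a`,
`(2a/h²) ∫ [Σ_{k≥0} K'((x − (2k+1)a − u)/h)] f_Y(u) du = (K_h ⋆ f_X)(x)`. -/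
theorem stmt_4 (a A : ℝ) (ha : 0 < a) (hA : 0 < A)
    (fX : ℝ → ℝ) (hfX_pos : ∀ x, 0 ≤ fX x) (hfX_int : Integrable fX)
    (fε : ℝ → ℝ) (hfε : fε = Set.indicator (Set.Icc (-a) a) fun _ => 1 / (2 * a))
    (fY : ℝ → ℝ) (hfY : ∀ x, fY x = ∫ u, fX (x - u) * fε u)
    (K : ℝ → ℝ) (hK : ContDiff ℝ 1 K)
    (hKsupp : Function.support K ⊆ Set.Icc (-A) A)
    (h : ℝ) (hh : 0 < h) (hha : A * h ≤ a) :
    ∀ x : ℝ,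
      (2 * a / h ^ 2) *
          ∫ u, (∑' k : ℕ, deriv K ((x - (2 * (k : ℝ) + 1) * a - u) / h)) * fY u
        = ∫ v, (h⁻¹ * K ((x - v) / h)) * fX v := by
  intro x
  have hh0 : h ≠ 0 := ne_of_gt hh
  have ha0 : a ≠ 0 := ne_of_gt ha
  -- basic facts about K
  have hKc : Continuous K := hK.continuous
  have hK'c : Continuous (deriv K) := hK.continuous_deriv le_rfl
  have hKdiff : Differentiable ℝ K := hK.differentiable one_ne_zero
  have hKzero : ∀ y : ℝ, y ∉ Set.Icc (-A) A → K y = 0 := by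
    intro y hy
    by_contra hne
    exact hy (hKsupp hne)
  have hKcs : HasCompactSupport K :=
    HasCompactSupport.intro isCompact_Icc hKzero
  have htsupp : tsupport K ⊆ Set.Icc (-A) A :=
    closure_minimal hKsupp isClosed_Icc
  have hK'zero : ∀ y : ℝ, y ∉ Set.Icc (-A) A → deriv K y = 0 := by
    intro y hy
    have : y ∉ Function.support (deriv K) := fun hmem => hy (htsupp (support_deriv_subset hmem))
    exact Function.notMem_support.mp this
  obtain ⟨M, hM⟩ := hKcs.exists_bound_of_continuous hKc
  obtain ⟨M', hM'⟩ := hKcs.deriv.exists_bound_of_continuous hK'c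
  -- fε facts
  have hfε_int : Integrable fε := by
    rw [hfε]
    rw [integrable_indicator_iff measurableSet_Icc]
    exact integrableOn_const measure_Icc_lt_top.ne
  -- fY integrability
  have hbase : Integrable (fun p : ℝ × ℝ => fε p.2 * fX (p.1 - p.2))
      (volume.prod volume) :=
    hfε_int.convolution_integrand (ContinuousLinearMap.mul ℝ ℝ) hfX_int
  have hfY_int : Integrable fY := by
    refine (hbase.integral_prod_left).congr (Filter.Eventually.of_forall fun u => ?_)
    rw [hfY u]
    exact integral_congr_ae (Filter.Eventually.of_forall fun t => by simp [mul_comm])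
  -- the family of functions
  set g : ℕ → ℝ → ℝ := fun k u => deriv K ((x - (2 * (k : ℝ) + 1) * a - u) / h) with hg
  have hg_cont : ∀ k, Continuous (g k) := by
    intro k
    exact hK'c.comp (by fun_prop)
  have hg_supp : ∀ (k : ℕ) (u : ℝ),
      u ∉ Set.Icc (x - (2 * (k : ℝ) + 2) * a) (x - 2 * (k : ℝ) * a) → g k u = 0 := by
    intro k u hu
    apply hK'zero
    intro hmem
    rcases hmem with ⟨h1, h2⟩
    apply hu
    rw [div_le_iff₀ hh] at h2
    rw [le_div_iff₀ hh] at h1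
    constructor <;> nlinarith
  have hg_bdd : ∀ k u, ‖g k u‖ ≤ M' := fun k u => hM' _
  -- the summability bound
  set S : ℕ → Set ℝ := fun k => Set.Ioc (x - (2 * (k : ℝ) + 2) * a) (x - 2 * (k : ℝ) * a)
    with hS
  have hS_disj : Pairwise (Function.onFun Disjoint S) := by
    intro j k hjk
    rw [Function.onFun, hS]
    rw [Set.Ioc_disjoint_Ioc]
    rcases lt_or_gt_of_ne hjk with hlt | hlt
    · have : (j : ℝ) + 1 ≤ k := by exact_mod_cast hlt
      refine le_trans (min_le_right _ _) (le_trans ?_ (le_max_left _ _))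
      nlinarith
    · have : (k : ℝ) + 1 ≤ j := by exact_mod_cast hlt
      refine le_trans (min_le_left _ _) (le_trans ?_ (le_max_right _ _))
      nlinarith
  have hfk_meas : ∀ k : ℕ, AEStronglyMeasurable (fun u => g k u * fY u) volume :=
    fun k => ((hg_cont k).aestronglyMeasurable).mul hfY_int.aestronglyMeasurable
  have hbound : (∑' k : ℕ, ∫⁻ u, ‖g k u * fY u‖₊) ≠ ∞ := by
    have hle : ∀ k : ℕ, (∫⁻ u, ‖g k u * fY u‖₊)
        ≤ ∫⁻ u in S k, ENNReal.ofReal M' * ‖fY u‖₊ := by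
      intro k
      have heq : (fun u => (‖g k u * fY u‖₊ : ℝ≥0∞))
          = fun u => (Set.Icc (x - (2 * (k : ℝ) + 2) * a) (x - 2 * (k : ℝ) * a)).indicator
              (fun u => (‖g k u * fY u‖₊ : ℝ≥0∞)) u := by
        funext u
        by_cases hu : u ∈ Set.Icc (x - (2 * (k : ℝ) + 2) * a) (x - 2 * (k : ℝ) * a)
        · rw [Set.indicator_of_mem hu]
        · rw [Set.indicator_of_notMem hu, hg_supp k u hu]
          simp
      rw [heq, lintegral_indicator measurableSet_Icc]
      rw [← Measure.restrict_congr_set Ioc_ae_eq_Icc]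
      refine setLIntegral_mono' measurableSet_Ioc fun u _ => ?_
      rw [nnnorm_mul, ENNReal.coe_mul]
      gcongr
      rw [← enorm_eq_nnnorm, ← ofReal_norm]
      exact ENNReal.ofReal_le_ofReal (hg_bdd k u)
    refine ne_top_of_le_ne_top ?_ (ENNReal.tsum_le_tsum hle)
    rw [← lintegral_iUnion (fun k => measurableSet_Ioc) hS_disj]
    have : (∫⁻ u in ⋃ k, S k, ENNReal.ofReal M' * ‖fY u‖₊)
        ≤ ∫⁻ u, ENNReal.ofReal M' * ‖fY u‖₊ :=
      lintegral_mono' Measure.restrict_le_self le_rfl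
    refine ne_top_of_le_ne_top ?_ this
    rw [lintegral_const_mul' _ _ ENNReal.ofReal_ne_top]
    exact ENNReal.mul_ne_top ENNReal.ofReal_ne_top hfY_int.2.ne
  -- step 1 : interchange sum and integral
  have step1 : (∫ u, (∑' k : ℕ, g k u) * fY u) = ∑' k : ℕ, ∫ u, g k u * fY u := by
    rw [show (fun u => (∑' k : ℕ, g k u) * fY u)
        = fun u => ∑' k : ℕ, g k u * fY u from funext fun u => (tsum_mul_right).symm]
    exact integral_tsum hfk_meas hbound
  -- the telescoping sequence
  set B : ℕ → ℝ := fun k => ∫ w, K ((x - 2 * (k : ℝ) * a - w) / h) * fX w with hB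
  have hBint : ∀ b : ℝ, Integrable (fun w => K ((b - w) / h) * fX w) := by
    intro b
    exact hfX_int.bdd_mul (hKc.comp (by fun_prop)).aestronglyMeasurable
      (Filter.Eventually.of_forall fun w => hM _)
  -- inner integral computation
  have hJ : ∀ (k : ℕ) (w : ℝ), (∫ u, g k u * fε (u - w))
      = (1 / (2 * a)) * (h * (K ((x - 2 * (k : ℝ) * a - w) / h)
          - K ((x - (2 * (k : ℝ) + 2) * a - w) / h))) := by
    intro k w
    have hind : ∀ u, g k u * fε (u - w)
        = (Set.Icc (w - a) (w + a)).indicator (fun u => g k u * (1 / (2 * a))) u := by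
      intro u
      by_cases hu : u ∈ Set.Icc (w - a) (w + a)
      · rw [Set.indicator_of_mem hu, hfε, Set.indicator_of_mem]
        rcases hu with ⟨h1, h2⟩
        exact ⟨by simp; linarith, by simp; linarith⟩
      · rw [Set.indicator_of_notMem hu, hfε, Set.indicator_of_notMem, mul_zero]
        intro hmem
        rcases hmem with ⟨h1, h2⟩
        exact hu ⟨by linarith, by linarith⟩
    rw [show (fun u => g k u * fε (u - w))
        = fun u => (Set.Icc (w - a) (w + a)).indicator (fun u => g k u * (1 / (2 * a))) u
        from funext hind]
    rw [integral_indicator measurableSet_Icc, integral_Icc_eq_integral_Ioc,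
      ← intervalIntegral.integral_of_le (by linarith : w - a ≤ w + a),
      intervalIntegral.integral_mul_const]
    have hderiv : ∀ u ∈ Set.uIcc (w - a) (w + a),
        HasDerivAt (fun u => -h * K ((x - (2 * (k : ℝ) + 1) * a - u) / h)) (g k u) u := by
      intro u _
      have h1 : HasDerivAt (fun u : ℝ => (x - (2 * (k : ℝ) + 1) * a - u) / h) (-1 / h) u := by
        simpa using ((hasDerivAt_id u).const_sub (x - (2 * (k : ℝ) + 1) * a)).div_const h
      have h2 : HasDerivAt K (deriv K ((x - (2 * (k : ℝ) + 1) * a - u) / h))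
          ((x - (2 * (k : ℝ) + 1) * a - u) / h) := (hKdiff _).hasDerivAt
      have h3 := (h2.comp u h1).const_mul (-h)
      refine h3.congr_deriv ?_
      symm
      rw [hg]
      simp only [Function.comp]
      field_simp
    have hint : IntervalIntegrable (g k) volume (w - a) (w + a) :=
      (hg_cont k).intervalIntegrable _ _
    rw [intervalIntegral.integral_eq_sub_of_hasDerivAt hderiv hint]
    have e1 : x - (2 * (k : ℝ) + 1) * a - (w + a) = x - (2 * (k : ℝ) + 2) * a - w := by ring
    have e2 : x - (2 * (k : ℝ) + 1) * a - (w - a) = x - 2 * (k : ℝ) * a - w := by ring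
    rw [e1, e2]
    ring
  -- step 2 : per-k Fubini computation
  have step2 : ∀ k : ℕ, (∫ u, g k u * fY u) = (h / (2 * a)) * (B k - B (k + 1)) := by
    intro k
    have hfY' : ∀ u, fY u = ∫ w, fX w * fε (u - w) := by
      intro u
      rw [hfY u, ← integral_sub_left_eq_self (fun w => fX w * fε (u - w)) volume u]
      simp
    have hProd : Integrable (fun p : ℝ × ℝ => g k p.1 * (fX p.2 * fε (p.1 - p.2)))
        (volume.prod volume) :=
      (hfX_int.convolution_integrand (ContinuousLinearMap.mul ℝ ℝ) hfε_int).bdd_mul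
        ((hg_cont k).comp continuous_fst).aestronglyMeasurable
        (Filter.Eventually.of_forall fun p => hg_bdd k p.1)
    calc (∫ u, g k u * fY u)
        = ∫ u, ∫ w, g k u * (fX w * fε (u - w)) := by
          congr 1
          funext u
          rw [hfY' u, ← integral_const_mul]
      _ = ∫ w, ∫ u, g k u * (fX w * fε (u - w)) := integral_integral_swap hProd
      _ = ∫ w, fX w * ∫ u, g k u * fε (u - w) := by
          congr 1
          funext w
          rw [← integral_const_mul]
          congr 1
          funext u
          ring
      _ = ∫ w, fX w * ((1 / (2 * a)) * (h * (K ((x - 2 * (k : ℝ) * a - w) / h)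
            - K ((x - (2 * (k : ℝ) + 2) * a - w) / h)))) := by
          congr 1
          funext w
          rw [hJ k w]
      _ = (h / (2 * a)) * (B k - B (k + 1)) := by
          have hsplit : (fun w => fX w * ((1 / (2 * a)) * (h * (K ((x - 2 * (k : ℝ) * a - w) / h)
              - K ((x - (2 * (k : ℝ) + 2) * a - w) / h)))))
              = fun w => (h / (2 * a)) * (K ((x - 2 * (k : ℝ) * a - w) / h) * fX w
                - K ((x - (2 * (k : ℝ) + 2) * a - w) / h) * fX w) := by
            funext w
            ring
          rw [hsplit, integral_const_mul, integral_sub (hBint _) (hBint _)]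
          have hBk1 : B (k + 1) = ∫ w, K ((x - (2 * (k : ℝ) + 2) * a - w) / h) * fX w := by
            simp only [hB]
            congr 1
            funext w
            congr 2
            all_goals push_cast
            all_goals ring
          rw [hBk1]
  -- summability of the series of integrals
  have hsumm : Summable (fun k : ℕ => ∫ u, g k u * fY u) := by
    apply Summable.of_norm
    apply Summable.of_nonneg_of_le (fun k => norm_nonneg _)
      (fun k => ?_) (ENNReal.summable_toReal hbound)
    calc ‖∫ u, g k u * fY u‖ ≤ (∫⁻ u, ENNReal.ofReal ‖g k u * fY u‖).toReal :=
          norm_integral_le_lintegral_norm _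
      _ = (∫⁻ u, (‖g k u * fY u‖₊ : ℝ≥0∞)).toReal := by
          congr 1
          exact lintegral_congr fun u => by rw [ofReal_norm, enorm_eq_nnnorm]
  -- limit of B
  have hBtend : Tendsto B atTop (nhds 0) := by
    have h0 : (0 : ℝ) = ∫ (w : ℝ), (0 : ℝ) := by simp
    rw [h0]
    apply tendsto_integral_of_dominated_convergence (fun w => M * fX w)
    · intro n
      exact ((hKc.comp (by fun_prop)).aestronglyMeasurable).mul
        hfX_int.aestronglyMeasurable
    · exact hfX_int.const_mul M
    · intro n
      refine Filter.Eventually.of_forall fun w => ?_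
      rw [norm_mul]
      have h1 : ‖fX w‖ = fX w := abs_of_nonneg (hfX_pos w)
      calc ‖K ((x - 2 * (n : ℝ) * a - w) / h)‖ * ‖fX w‖ ≤ M * ‖fX w‖ := by
            gcongr
            exact hM _
        _ = M * fX w := by rw [h1]
    · refine Filter.Eventually.of_forall fun w => ?_
      obtain ⟨N, hN⟩ := exists_nat_gt ((x - w + A * h) / (2 * a))
      apply tendsto_nhds_of_eventually_eq
      rw [Filter.eventually_atTop]
      refine ⟨N, fun n hn => ?_⟩
      have hn' : (N : ℝ) ≤ n := by exact_mod_cast hn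
      have harg : (x - 2 * (n : ℝ) * a - w) / h < -A := by
        rw [div_lt_iff₀ hh]
        rw [div_lt_iff₀ (by linarith : (0:ℝ) < 2 * a)] at hN
        nlinarith
      rw [hKzero _ (fun hmem => absurd hmem.1 (by linarith)), zero_mul]
  -- value of the telescoping sum
  have htsum : (∑' k : ℕ, ∫ u, g k u * fY u) = (h / (2 * a)) * B 0 := by
    have hps : ∀ n : ℕ, (∑ k ∈ Finset.range n, ∫ u, g k u * fY u)
        = (h / (2 * a)) * (B 0 - B n) := by
      intro n
      rw [Finset.sum_congr rfl (fun k _ => step2 k), ← Finset.mul_sum,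
        Finset.sum_range_sub' B n]
    have h1 : Tendsto (fun n : ℕ => ∑ k ∈ Finset.range n, ∫ u, g k u * fY u)
        atTop (nhds (∑' k : ℕ, ∫ u, g k u * fY u)) := hsumm.hasSum.tendsto_sum_nat
    have h2 : Tendsto (fun n : ℕ => (h / (2 * a)) * (B 0 - B n)) atTop
        (nhds ((h / (2 * a)) * (B 0 - 0))) :=
      (tendsto_const_nhds.sub hBtend).const_mul _
    rw [sub_zero] at h2
    refine tendsto_nhds_unique h1 ?_
    rw [show (fun n : ℕ => ∑ k ∈ Finset.range n, ∫ u, g k u * fY u)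
      = fun n : ℕ => (h / (2 * a)) * (B 0 - B n) from funext hps]
    exact h2
  -- conclusion
  rw [show (fun u => (∑' k : ℕ, deriv K ((x - (2 * (k : ℝ) + 1) * a - u) / h)) * fY u)
      = fun u => (∑' k : ℕ, g k u) * fY u from rfl] at *
  rw [step1, htsum]
  have hB0 : B 0 = ∫ v, K ((x - v) / h) * fX v := by
    simp only [hB]
    congr 1
    funext w
    norm_num
  rw [hB0]
  rw [show (fun v => h⁻¹ * K ((x - v) / h) * fX v)
      = fun v => h⁻¹ * (K ((x - v) / h) * fX v) from funext fun v => by ring,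
    integral_const_mul]
  field_simp
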